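/- With X^j the position sequence of letter j in the k-bonacci word, define the difference sequences Δ^j_n = X^{j+1}_n − X^j_n for 0 ≤ j ≤ k−2. Then the sets {Δ^j_n : n ≥ 1} for 0 ≤ j ≤ k−2 are pairwise disjoint. -/

import Mathlib

/-- The k-bonacci substitution on the alphabet {0,…,k−1}. -/
def subW (k : ℕ) (w : List ℕ) : List ℕ :=
  w.flatMap (fun j => if j + 1 < k then [0, j + 1] else [0])

/-- The k-bonacci word (0-indexed). -/
def kbonacci (k n : ℕ) : ℕ := ((subW k)^[n + 1] [0]).getD n 0

/-- X^j_n: the 1-based position of the n-th (1-based) occurrence of the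
letter j in the k-bonacci word. -/
noncomputable def Xpos (k j n : ℕ) : ℕ :=
  Nat.nth (fun m => kbonacci k m = j) (n - 1) + 1

/-- Δ^j_n = X^{j+1}_n − X^j_n, the difference rows of the positions table. -/
noncomputable def Δrow (k j n : ℕ) : ℕ := Xpos k (j + 1) n - Xpos k j n

namespace KBonacciAux

/-- image of a single letter under the substitution -/
def sig (k c : ℕ) : List ℕ := if c + 1 < k then [0, c + 1] else [0]

lemma subW_eq (k : ℕ) (w : List ℕ) : subW k w = w.flatMap (sig k) := rfl

/-- the iterates of the substitution, starting from `[0]` -/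
def Wit (k m : ℕ) : List ℕ := (subW k)^[m] [0]

lemma Wit_succ (k m : ℕ) : Wit k (m + 1) = (Wit k m).flatMap (sig k) := by
  rw [Wit, Function.iterate_succ_apply', ← Wit, subW_eq]

lemma length_flatMap (k : ℕ) (w : List ℕ) :
    (w.flatMap (sig k)).length = w.length + w.countP (fun c => c + 1 < k) := by
  induction w with
  | nil => simp
  | cons c w ih =>
    simp only [List.flatMap_cons, List.length_append, ih, List.countP_cons]
    by_cases h : c + 1 < k <;> simp [sig, h] <;> omega

lemma flatMap_prefix {u v : List ℕ} (f : ℕ → List ℕ) (h : u <+: v) :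
    u.flatMap f <+: v.flatMap f := by
  obtain ⟨r, rfl⟩ := h
  exact ⟨r.flatMap f, List.flatMap_append.symm⟩

lemma Wit_prefix (k m : ℕ) : Wit k m <+: Wit k (m + 1) := by
  induction m with
  | zero =>
    show [0] <+: Wit k 1
    rw [Wit_succ]
    show [0] <+: [0].flatMap (sig k)
    simp only [List.flatMap_cons, List.flatMap_nil, List.append_nil, sig]
    by_cases h : 0 + 1 < k
    · rw [if_pos h]; exact ⟨[0 + 1], rfl⟩
    · rw [if_neg h]
  | succ m ih =>
    rw [Wit_succ, Wit_succ]
    exact flatMap_prefix _ ih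

lemma Wit_prefix_le (k : ℕ) {m m' : ℕ} (h : m ≤ m') : Wit k m <+: Wit k m' := by
  induction m' with
  | zero => simp_all
  | succ m' ih =>
    rcases Nat.lt_or_ge m (m' + 1) with h' | h'
    · exact (ih (by omega)).trans (Wit_prefix k m')
    · have : m = m' + 1 := by omega
      subst this; exact List.prefix_refl _
lemma zero_prefix_Wit (k m : ℕ) : [0] <+: Wit k m :=
  Wit_prefix_le k (Nat.zero_le m)

lemma Wit_length (k : ℕ) (hk : 2 ≤ k) (m : ℕ) : m < (Wit k m).length := by
  induction m with
  | zero => simp [Wit]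
  | succ m ih =>
    obtain ⟨r, hr⟩ := zero_prefix_Wit k m
    have h1 : (Wit k m).countP (fun c => c + 1 < k) ≥ 1 := by
      rw [← hr]
      have : (0 : ℕ) + 1 < k := by omega
      simp [List.countP_cons, this]
    rw [Wit_succ, length_flatMap]
    omega

lemma getD_prefix {u v : List ℕ} (h : u <+: v) {n : ℕ} (hn : n < u.length) :
    v.getD n 0 = u.getD n 0 := by
  obtain ⟨r, rfl⟩ := h
  exact List.getD_append u r 0 n hn

lemma kbonacci_eq_Wit (k : ℕ) (hk : 2 ≤ k) {m n : ℕ} (hn : n < (Wit k m).length) :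
    kbonacci k n = (Wit k m).getD n 0 := by
  have h0 : kbonacci k n = (Wit k (n + 1)).getD n 0 := rfl
  rcases Nat.le_total m (n + 1) with h | h
  · rw [h0, getD_prefix (Wit_prefix_le k h) hn]
  · have hn' : n < (Wit k (n + 1)).length := Wit_length k hk (n + 1) |>.trans_le' (by omega)
    rw [h0, ← getD_prefix (Wit_prefix_le k h) hn']

/-- number of letters `≠ k-1` among the first `t` letters of the k-bonacci word -/
def Af (k t : ℕ) : ℕ := ((List.range t).map (kbonacci k)).countP (fun c => c + 1 < k)

lemma take_Wit (k : ℕ) (hk : 2 ≤ k) {m t : ℕ} (ht : t ≤ (Wit k m).length) :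
    (Wit k m).take t = (List.range t).map (kbonacci k) := by
  apply List.ext_getElem
  · simp; omega
  · intro i h1 h2
    simp only [List.getElem_take, List.getElem_map, List.getElem_range]
    have hi : i < (Wit k m).length := by simp at h1; omega
    rw [kbonacci_eq_Wit k hk hi, List.getD_eq_getElem _ _ hi]

lemma countP_take_eq_Af (k : ℕ) (hk : 2 ≤ k) {m t : ℕ} (ht : t ≤ (Wit k m).length) :
    ((Wit k m).take t).countP (fun c => c + 1 < k) = Af k t := by
  rw [take_Wit k hk ht, Af]

lemma Af_succ (k t : ℕ) :
    Af k (t + 1) = Af k t + if kbonacci k t + 1 < k then 1 else 0 := by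
  simp only [Af, List.range_succ, List.map_append, List.countP_append, List.map_cons,
    List.map_nil, List.countP_cons, List.countP_nil]
  by_cases h : kbonacci k t + 1 < k <;> simp [h]

lemma Af_mono (k : ℕ) {t t' : ℕ} (h : t ≤ t') : Af k t ≤ Af k t' := by
  induction t' with
  | zero => simp_all
  | succ t' ih =>
    rcases Nat.lt_or_ge t (t' + 1) with h' | h'
    · have := ih (by omega)
      rw [Af_succ]; omega
    · have : t = t' + 1 := by omega
      subst this; rfl

/-- forward structure: image of letter `t` inside the fixed point -/
lemma list_forward (k : ℕ) : ∀ (w : List ℕ) (t : ℕ), t < w.length →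
    (w.flatMap (sig k)).getD (t + (w.take t).countP (fun c => c + 1 < k)) 0 = 0 ∧
    (w.getD t 0 + 1 < k →
      (w.flatMap (sig k)).getD (t + (w.take t).countP (fun c => c + 1 < k) + 1) 0
        = w.getD t 0 + 1) := by
  intro w
  induction w with
  | nil => intro t ht; simp at ht
  | cons c w ih =>
    intro t ht
    cases t with
    | zero =>
      simp only [List.take_zero, List.countP_nil, Nat.add_zero, List.flatMap_cons,
        List.getD_cons_zero, Nat.zero_add]
      constructor
      · show (sig k c ++ w.flatMap (sig k)).getD 0 0 = 0
        by_cases h : c + 1 < k <;> simp [sig, h]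
      · intro h
        show (sig k c ++ w.flatMap (sig k)).getD 1 0 = c + 1
        simp [sig, h]
    | succ t =>
      have ht' : t < w.length := by simpa using ht
      obtain ⟨h1, h2⟩ := ih t ht'
      have hc : ((c :: w).take (t + 1)).countP (fun x => x + 1 < k)
          = (if c + 1 < k then 1 else 0) + (w.take t).countP (fun x => x + 1 < k) := by
        simp [List.countP_cons]
        by_cases h : c + 1 < k <;> simp [h] <;> omega
      have hlen : (sig k c).length = if c + 1 < k then 2 else 1 := by
        by_cases h : c + 1 < k <;> simp [sig, h]
      have key : ∀ i : ℕ, ((c :: w).flatMap (sig k)).getD ((sig k c).length + i) 0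
          = (w.flatMap (sig k)).getD i 0 := by
        intro i
        rw [List.flatMap_cons, List.getD_append_right _ _ _ _ (by omega)]
        congr 1; omega
      constructor
      · have harith : t + 1 + ((c :: w).take (t + 1)).countP (fun x => x + 1 < k)
            = (sig k c).length + (t + (w.take t).countP (fun x => x + 1 < k)) := by
          rw [hc, hlen]; by_cases h : c + 1 < k <;> simp [h] <;> omega
        rw [harith, key]; exact h1
      · intro hv
        have hv' : w.getD t 0 + 1 < k := by simpa using hv
        have harith : t + 1 + ((c :: w).take (t + 1)).countP (fun x => x + 1 < k) + 1
            = (sig k c).length + (t + (w.take t).countP (fun x => x + 1 < k) + 1) := by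
          rw [hc, hlen]; by_cases h : c + 1 < k <;> simp [h] <;> omega
        rw [harith, key]
        simpa using h2 hv'

/-- backward structure: every position in the image comes from a letter -/
lemma list_backward (k : ℕ) : ∀ (w : List ℕ) (m : ℕ), m < (w.flatMap (sig k)).length →
    (w.flatMap (sig k)).getD m 0 = 0 ∨
    ∃ t < w.length, m = t + (w.take t).countP (fun c => c + 1 < k) + 1 ∧
      w.getD t 0 + 1 < k ∧ (w.flatMap (sig k)).getD m 0 = w.getD t 0 + 1 := by
  intro w
  induction w with
  | nil => intro m hm; simp at hm
  | cons c w ih =>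
    intro m hm
    have hlen : (sig k c).length = if c + 1 < k then 2 else 1 := by
      by_cases h : c + 1 < k <;> simp [sig, h]
    by_cases hsm : m < (sig k c).length
    · -- position inside the image of the head letter
      by_cases h : c + 1 < k
      · rw [hlen, if_pos h] at hsm
        interval_cases m
        · left; simp [sig, h]
        · right
          refine ⟨0, by simp, by simp, by simpa using h, ?_⟩
          simp [sig, h]
      · rw [hlen, if_neg h] at hsm
        interval_cases m
        left; simp [sig, h]
    · push_neg at hsm
      obtain ⟨i, rfl⟩ := Nat.exists_eq_add_of_le hsm
      have key : ((c :: w).flatMap (sig k)).getD ((sig k c).length + i) 0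
          = (w.flatMap (sig k)).getD i 0 := by
        rw [List.flatMap_cons, List.getD_append_right _ _ _ _ (by omega)]
        congr 1; omega
      have hi : i < (w.flatMap (sig k)).length := by
        rw [List.flatMap_cons, List.length_append] at hm; omega
      rcases ih i hi with h0 | ⟨t, htw, hteq, htk, htv⟩
      · left; rw [key]; exact h0
      · right
        refine ⟨t + 1, by simpa using Nat.succ_lt_succ htw, ?_, by simpa using htk, ?_⟩
        · have hc : ((c :: w).take (t + 1)).countP (fun x => x + 1 < k)
              = (if c + 1 < k then 1 else 0) + (w.take t).countP (fun x => x + 1 < k) := by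
            simp [List.countP_cons]
            by_cases h : c + 1 < k <;> simp [h] <;> omega
          rw [hc, hlen]
          by_cases h : c + 1 < k <;> simp [h] <;> omega
        · rw [key, htv]; simp

lemma omega_forward (k : ℕ) (hk : 2 ≤ k) (t : ℕ) :
    kbonacci k (t + Af k t) = 0 ∧
      (kbonacci k t + 1 < k → kbonacci k (t + Af k t + 1) = kbonacci k t + 1) := by
  have htw : t < (Wit k (t + 1)).length := (Wit_length k hk (t + 1)).trans_le' (by omega)
  have hAf : ((Wit k (t + 1)).take t).countP (fun c => c + 1 < k) = Af k t :=
    countP_take_eq_Af k hk (by omega)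
  have hAf1 : ((Wit k (t + 1)).take (t + 1)).countP (fun c => c + 1 < k) = Af k (t + 1) :=
    countP_take_eq_Af k hk (by omega)
  have hcle : ((Wit k (t + 1)).take (t + 1)).countP (fun c => c + 1 < k)
      ≤ (Wit k (t + 1)).countP (fun c => c + 1 < k) :=
    (List.take_sublist _ _).countP_le
  have hcle0 : ((Wit k (t + 1)).take t).countP (fun c => c + 1 < k)
      ≤ (Wit k (t + 1)).countP (fun c => c + 1 < k) :=
    (List.take_sublist _ _).countP_le
  have hflat : (Wit k (t + 1)).flatMap (sig k) = Wit k (t + 2) := (Wit_succ k (t + 1)).symm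
  have hlenflat : (Wit k (t + 2)).length
      = (Wit k (t + 1)).length + (Wit k (t + 1)).countP (fun c => c + 1 < k) := by
    rw [← hflat, length_flatMap]
  obtain ⟨h1, h2⟩ := list_forward k (Wit k (t + 1)) t htw
  rw [hAf, hflat] at h1 h2
  have hwt : (Wit k (t + 1)).getD t 0 = kbonacci k t := (kbonacci_eq_Wit k hk htw).symm
  rw [hwt] at h2
  constructor
  · have hb : t + Af k t < (Wit k (t + 2)).length := by rw [hlenflat]; omega
    rw [kbonacci_eq_Wit k hk hb, h1]
  · intro hc
    have hstep : Af k (t + 1) = Af k t + 1 := by rw [Af_succ, if_pos hc]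
    have hb : t + Af k t + 1 < (Wit k (t + 2)).length := by
      rw [hlenflat]; omega
    rw [kbonacci_eq_Wit k hk hb, h2 hc]

lemma omega_backward (k : ℕ) (hk : 2 ≤ k) (m : ℕ) (h : kbonacci k m ≠ 0) :
    ∃ t, kbonacci k t + 1 < k ∧ m = t + Af k t + 1 ∧
      kbonacci k m = kbonacci k t + 1 := by
  have hflat : (Wit k m).flatMap (sig k) = Wit k (m + 1) := (Wit_succ k m).symm
  have hm : m < ((Wit k m).flatMap (sig k)).length := by
    rw [hflat]; exact Wit_length k hk (m + 1) |>.trans_le' (by omega)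
  have hval : ((Wit k m).flatMap (sig k)).getD m 0 = kbonacci k m := by
    conv_rhs => rw [kbonacci_eq_Wit k hk (m := m + 1) (by rwa [← hflat])]
    rw [hflat]
  rcases list_backward k (Wit k m) m hm with h0 | ⟨t, htw, hteq, htk, htv⟩
  · rw [hval] at h0; exact absurd h0 h
  · have hwt : (Wit k m).getD t 0 = kbonacci k t := (kbonacci_eq_Wit k hk htw).symm
    have hAf : ((Wit k m).take t).countP (fun c => c + 1 < k) = Af k t :=
      countP_take_eq_Af k hk (by omega)
    rw [hwt] at htk htv
    rw [hval] at htv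
    exact ⟨t, htk, by rw [hteq, hAf], htv⟩

lemma kbonacci_zero (k : ℕ) (hk : 2 ≤ k) : kbonacci k 0 = 0 := by
  have := (omega_forward k hk 0).1
  simpa [Af] using this

lemma Af_strict (k : ℕ) {t t' : ℕ} (h : t < t') (hc : kbonacci k t + 1 < k) :
    Af k t < Af k t' := by
  have h1 : Af k (t + 1) = Af k t + 1 := by rw [Af_succ, if_pos hc]
  have h2 : Af k (t + 1) ≤ Af k t' := Af_mono k (by omega)
  omega

lemma count_corr (k : ℕ) (hk : 2 ≤ k) (j : ℕ) (hj : j + 2 ≤ k) :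
    ∀ t, Nat.count (fun m => kbonacci k m = j + 1) (t + Af k t + 1)
      = Nat.count (fun m => kbonacci k m = j) t := by
  intro t
  induction t with
  | zero =>
    simp only [Af, List.range_zero, List.map_nil, List.countP_nil, Nat.add_zero,
      Nat.zero_add, Nat.count_zero]
    rw [Nat.count_succ]
    simp [kbonacci_zero k hk]
  | succ t ih =>
    by_cases hc : kbonacci k t + 1 < k
    · have hstep : Af k (t + 1) = Af k t + 1 := by rw [Af_succ, if_pos hc]
      have hidx : t + 1 + Af k (t + 1) + 1 = (t + Af k t + 1) + 1 + 1 := by omega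
      have hv1 : kbonacci k (t + Af k t + 1) = kbonacci k t + 1 :=
        (omega_forward k hk t).2 hc
      have hv2 : kbonacci k (t + Af k t + 1 + 1) = 0 := by
        have := (omega_forward k hk (t + 1)).1
        have : kbonacci k (t + 1 + Af k (t + 1)) = 0 := this
        rwa [show t + 1 + Af k (t + 1) = t + Af k t + 1 + 1 by omega] at this
      rw [hidx, Nat.count_succ, Nat.count_succ, ih, Nat.count_succ, hv1, hv2]
      have : ¬ (0 = j + 1) := by omega
      simp only [this, if_false]
      by_cases hj : kbonacci k t = j
      · simp [hj]
      · have : ¬ (kbonacci k t + 1 = j + 1) := by omega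
        simp [hj, this]
    · have hstep : Af k (t + 1) = Af k t := by rw [Af_succ, if_neg hc]; omega
      have hidx : t + 1 + Af k (t + 1) + 1 = (t + Af k t + 1) + 1 := by omega
      have hv1 : kbonacci k (t + Af k t + 1) = 0 := by
        have := (omega_forward k hk (t + 1)).1
        rwa [show t + 1 + Af k (t + 1) = t + Af k t + 1 by omega] at this
      have hne : kbonacci k t ≠ j → True := fun _ => trivial
      rw [hidx, Nat.count_succ, ih, Nat.count_succ, hv1]
      have h1 : ¬ (0 = j + 1) := by omega
      have h2 : kbonacci k t ≠ j := by
        intro h; rw [h] at hc; omega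
      simp [h1, h2]

lemma pL_infinite (k : ℕ) (hk : 2 ≤ k) : ∀ j, j < k →
    {m | kbonacci k m = j}.Infinite := by
  intro j
  induction j with
  | zero =>
    intro _
    apply Set.infinite_of_forall_exists_gt
    intro a
    refine ⟨a + 1 + Af k (a + 1), ?_, by omega⟩
    show kbonacci k (a + 1 + Af k (a + 1)) = 0
    exact (omega_forward k hk (a + 1)).1
  | succ j ih =>
    intro hj
    have hinf := ih (by omega)
    apply Set.infinite_of_forall_exists_gt
    intro a
    obtain ⟨b, hb, hab⟩ := hinf.exists_gt a
    simp only [Set.mem_setOf_eq] at hb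
    refine ⟨b + Af k b + 1, ?_, by omega⟩
    show kbonacci k (b + Af k b + 1) = j + 1
    have hc : kbonacci k b + 1 < k := by rw [hb]; omega
    rw [(omega_forward k hk b).2 hc, hb]

lemma nth_corr (k : ℕ) (hk : 2 ≤ k) (j : ℕ) (hj : j + 2 ≤ k) (n : ℕ) :
    Nat.nth (fun m => kbonacci k m = j + 1) n
      = Nat.nth (fun m => kbonacci k m = j) n
        + Af k (Nat.nth (fun m => kbonacci k m = j) n) + 1 := by
  set t := Nat.nth (fun m => kbonacci k m = j) n with htdef
  have hinfj : {m | kbonacci k m = j}.Infinite := pL_infinite k hk j (by omega)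
  have ht : kbonacci k t = j := Nat.nth_mem_of_infinite hinfj n
  have hc : kbonacci k t + 1 < k := by omega
  have hft : kbonacci k (t + Af k t + 1) = j + 1 := by
    rw [(omega_forward k hk t).2 hc, ht]
  have hcount : Nat.count (fun m => kbonacci k m = j + 1) (t + Af k t + 1) = n := by
    rw [count_corr k hk j hj t, htdef, Nat.count_nth_of_infinite hinfj]
  have := Nat.nth_count (p := fun m => kbonacci k m = j + 1) hft
  rw [hcount] at this
  exact this

end KBonacciAux

open KBonacciAux in
/-- The value sets {Δ^j_n : n ≥ 1}, 0 ≤ j ≤ k−2, are pairwise disjoint. -/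
theorem delta_rows_disjoint (k : ℕ) (hk : 2 ≤ k) (i j : ℕ)
    (hi : i ≤ k - 2) (hj : j ≤ k - 2) (hij : i ≠ j) :
    Disjoint {m | ∃ n, 1 ≤ n ∧ Δrow k i n = m}
             {m | ∃ n, 1 ≤ n ∧ Δrow k j n = m} := by
  have hΔ : ∀ l n, l + 2 ≤ k → 1 ≤ n →
      Δrow k l n = Af k (Nat.nth (fun m => kbonacci k m = l) (n - 1)) + 1 := by
    intro l n hl hn
    rw [Δrow, Xpos, Xpos, nth_corr k hk l hl (n - 1)]
    omega
  rw [Set.disjoint_left]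
  rintro m ⟨n, hn, rfl⟩ ⟨n', hn', hm⟩
  have hi2 : i + 2 ≤ k := by omega
  have hj2 : j + 2 ≤ k := by omega
  rw [hΔ i n hi2 hn, hΔ j n' hj2 hn'] at hm
  set ti := Nat.nth (fun m => kbonacci k m = i) (n - 1) with hti
  set tj := Nat.nth (fun m => kbonacci k m = j) (n' - 1) with htj
  have hAeq : Af k tj = Af k ti := by omega
  have hvi : kbonacci k ti = i :=
    Nat.nth_mem_of_infinite (pL_infinite k hk i (by omega)) _
  have hvj : kbonacci k tj = j :=
    Nat.nth_mem_of_infinite (pL_infinite k hk j (by omega)) _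
  have htne : ti ≠ tj := fun h => hij (by rw [← hvi, h, hvj])
  rcases Nat.lt_or_ge ti tj with hlt | hge
  · have := Af_strict k hlt (by rw [hvi]; omega)
    omega
  · have hlt : tj < ti := by omega
    have := Af_strict k hlt (by rw [hvj]; omega)
    omega
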